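/- Let T = [0,1] with Lebesgue measure λ, let (Θ, 𝒜, π) be a probability space, let θ ↦ S_θ assign to each θ a measurable subset of [0,1] with (t,θ) ↦ 𝟙{t ∈ S_θ} jointly measurable, let α(t) = ∫_Θ 𝟙{t ∈ S_θ} dπ(θ), and let L_γ(S, S') = γ·λ(S \ S') + (1−γ)·λ(S' \ S) for γ ∈ [0,1]. If a measurable set Ŝ ⊆ [0,1] attains the infimum of S ↦ ∫_Θ L_γ(S, S_θ) dπ(θ) over all measurable S ⊆ [0,1], then up to λ-null sets {t : α(t) > γ} ⊆ Ŝ ⊆ {t : α(t) ≥ γ}, i.e. λ({t : α(t) > γ} \ Ŝ) = 0 and λ(Ŝ \ {t : α(t) ≥ γ}) = 0. -/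

import Mathlib

set_option linter.unusedSectionVars false


open MeasureTheory

/-- Lebesgue measure on `[0,1]`, as the restriction of `volume` to `Set.Icc 0 1`. -/
noncomputable def lam : Measure ℝ := volume.restrict (Set.Icc (0:ℝ) 1)

/-- The loss `L_γ(S, S') = γ·λ(S \ S') + (1−γ)·λ(S' \ S)`. -/
noncomputable def Lloss (γ : ℝ) (S S' : Set ℝ) : ℝ :=
  γ * (lam (S \ S')).toReal + (1 - γ) * (lam (S' \ S)).toReal

/-- `α(t) = ∫_Θ 𝟙{t ∈ S_θ} dπ(θ)`. -/
noncomputable def alphaFn {Θ : Type*} [MeasurableSpace Θ] (π : Measure Θ)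
    (S : Θ → Set ℝ) (t : ℝ) : ℝ :=
  ∫ θ, Set.indicator (S θ) (fun _ => (1:ℝ)) t ∂π

lemma lam_univ : lam Set.univ = 1 := by
  simp [lam, Real.volume_Icc]

lemma lam_le_one (E : Set ℝ) : lam E ≤ 1 := by
  rw [← lam_univ]; exact measure_mono (Set.subset_univ _)

lemma lam_ne_top (E : Set ℝ) : lam E ≠ ⊤ :=
  ne_top_of_le_ne_top (by norm_num) (lam_le_one E)

lemma lam_lt_top (E : Set ℝ) : lam E < ⊤ :=
  lt_of_le_of_ne le_top (lam_ne_top E)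

instance : IsFiniteMeasure lam :=
  ⟨by rw [lam_univ]; exact ENNReal.one_lt_top⟩

lemma toReal_lam_le_one (E : Set ℝ) : (lam E).toReal ≤ 1 := by
  have := ENNReal.toReal_mono (by norm_num) (lam_le_one E)
  simpa using this

/-- measure of disjoint union, in real form -/
lemma toReal_lam_union {X Y : Set ℝ} (h : Disjoint X Y) (hY : MeasurableSet Y) :
    (lam (X ∪ Y)).toReal = (lam X).toReal + (lam Y).toReal := by
  rw [measure_union h hY, ENNReal.toReal_add (lam_ne_top X) (lam_ne_top Y)]

section Main

variable {Θ : Type*} [MeasurableSpace Θ] (π : Measure Θ) [IsProbabilityMeasure π]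
    (S : Θ → Set ℝ)

lemma alphaFn_eq (hjoint : MeasurableSet {p : ℝ × Θ | p.1 ∈ S p.2}) (t : ℝ) :
    alphaFn π S t = (π {θ | t ∈ S θ}).toReal := by
  have hms : MeasurableSet {θ | t ∈ S θ} :=
    hjoint.preimage (measurable_prodMk_left (x := t))
  have h : (fun θ => Set.indicator (S θ) (fun _ => (1:ℝ)) t)
      = Set.indicator {θ | t ∈ S θ} (fun _ => (1:ℝ)) := by
    funext θ
    by_cases ht : t ∈ S θ <;> simp [Set.indicator, ht]
  rw [alphaFn, h]
  exact integral_indicator_one (μ := π) hms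

lemma alphaFn_measurable (hjoint : MeasurableSet {p : ℝ × Θ | p.1 ∈ S p.2}) :
    Measurable (alphaFn π S) := by
  have h : alphaFn π S = fun t => (π (Prod.mk t ⁻¹' {p : ℝ × Θ | p.1 ∈ S p.2})).toReal := by
    funext t; exact alphaFn_eq π S hjoint t
  rw [h]
  exact (measurable_measure_prodMk_left hjoint).ennreal_toReal

lemma alphaFn_bounds (hjoint : MeasurableSet {p : ℝ × Θ | p.1 ∈ S p.2}) (t : ℝ) :
    0 ≤ alphaFn π S t ∧ alphaFn π S t ≤ 1 := by
  rw [alphaFn_eq π S hjoint t]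
  refine ⟨ENNReal.toReal_nonneg, ?_⟩
  have := ENNReal.toReal_mono (by norm_num) (prob_le_one (μ := π) (s := {θ | t ∈ S θ}))
  simpa using this

lemma alphaFn_integrableOn (hjoint : MeasurableSet {p : ℝ × Θ | p.1 ∈ S p.2})
    (A : Set ℝ) : IntegrableOn (alphaFn π S) A lam := by
  refine (integrable_const (1:ℝ)).mono'
    ((alphaFn_measurable π S hjoint).aestronglyMeasurable) ?_
  refine ae_of_all _ fun t => ?_
  obtain ⟨h0, h1⟩ := alphaFn_bounds π S hjoint t
  rw [Real.norm_eq_abs, abs_of_nonneg h0]; exact h1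

/-- slices of measurable sets of the product give integrable real functions of θ -/
lemma integrable_toReal_slice {W : Set (ℝ × Θ)} (hW : MeasurableSet W) :
    Integrable (fun θ => (lam ((fun x => (x, θ)) ⁻¹' W)).toReal) π := by
  have hm : Measurable fun θ => lam ((fun x => (x, θ)) ⁻¹' W) :=
    measurable_measure_prodMk_right hW
  refine (integrable_const (1:ℝ)).mono' hm.ennreal_toReal.aestronglyMeasurable ?_
  refine ae_of_all _ fun θ => ?_
  rw [Real.norm_eq_abs, abs_of_nonneg ENNReal.toReal_nonneg]
  exact toReal_lam_le_one _

lemma integrable_toReal_inter (hjoint : MeasurableSet {p : ℝ × Θ | p.1 ∈ S p.2})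
    {A : Set ℝ} (hA : MeasurableSet A) :
    Integrable (fun θ => (lam (A ∩ S θ)).toReal) π := by
  have h := integrable_toReal_slice π
    (W := (A ×ˢ (Set.univ : Set Θ)) ∩ {p : ℝ × Θ | p.1 ∈ S p.2})
    ((hA.prod MeasurableSet.univ).inter hjoint)
  have heq : ∀ θ, (fun x => (x, θ)) ⁻¹' ((A ×ˢ (Set.univ : Set Θ)) ∩ {p : ℝ × Θ | p.1 ∈ S p.2})
      = A ∩ S θ := by
    intro θ; ext x; simp
  simpa [heq] using h

lemma integrable_Lloss (hjoint : MeasurableSet {p : ℝ × Θ | p.1 ∈ S p.2}) (γ : ℝ)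
    {T : Set ℝ} (hT : MeasurableSet T) :
    Integrable (fun θ => Lloss γ T (S θ)) π := by
  have h1 := integrable_toReal_slice π
    (W := (T ×ˢ (Set.univ : Set Θ)) \ {p : ℝ × Θ | p.1 ∈ S p.2})
    ((hT.prod MeasurableSet.univ).diff hjoint)
  have h2 := integrable_toReal_slice π
    (W := {p : ℝ × Θ | p.1 ∈ S p.2} \ (T ×ˢ (Set.univ : Set Θ)))
    (hjoint.diff (hT.prod MeasurableSet.univ))
  have e1 : ∀ θ, (fun x => (x, θ)) ⁻¹' ((T ×ˢ (Set.univ : Set Θ)) \ {p : ℝ × Θ | p.1 ∈ S p.2})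
      = T \ S θ := by intro θ; ext x; simp
  have e2 : ∀ θ, (fun x => (x, θ)) ⁻¹' ({p : ℝ × Θ | p.1 ∈ S p.2} \ (T ×ˢ (Set.univ : Set Θ)))
      = S θ \ T := by intro θ; ext x; simp
  simp only [e1] at h1
  simp only [e2] at h2
  exact (h1.const_mul γ).add (h2.const_mul (1 - γ))

/-- the Fubini step -/
lemma fubini_key (hjoint : MeasurableSet {p : ℝ × Θ | p.1 ∈ S p.2})
    {A : Set ℝ} (hA : MeasurableSet A) :
    ∫ θ, (lam (A ∩ S θ)).toReal ∂π = ∫ t in A, alphaFn π S t ∂lam := by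
  set J : Set (ℝ × Θ) := {p : ℝ × Θ | p.1 ∈ S p.2} with hJ
  set E : Set (ℝ × Θ) := (A ×ˢ (Set.univ : Set Θ)) ∩ J with hE
  have hEm : MeasurableSet E := (hA.prod MeasurableSet.univ).inter hjoint
  have hslice : ∀ θ, (fun x => (x, θ)) ⁻¹' E = A ∩ S θ := by
    intro θ; ext x; simp [hE, hJ]
  have hmΘ : Measurable fun θ => lam (A ∩ S θ) := by
    have := measurable_measure_prodMk_right (μ := lam) hEm
    simpa [hslice] using this
  have hmt : Measurable fun t => π {θ | t ∈ S θ} :=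
    measurable_measure_prodMk_left hjoint
  -- left side as toReal of a lintegral
  have hL : ∫ θ, (lam (A ∩ S θ)).toReal ∂π = (∫⁻ θ, lam (A ∩ S θ) ∂π).toReal :=
    integral_toReal hmΘ.aemeasurable (ae_of_all _ fun θ => lam_lt_top _)
  -- Tonelli
  have h1 : ∫⁻ θ, lam (A ∩ S θ) ∂π = (lam.prod π) E := by
    rw [Measure.prod_apply_symm hEm]
    simp_rw [hslice]
  have h2 : (lam.prod π) E = ∫⁻ t in A, π {θ | t ∈ S θ} ∂lam := by
    rw [Measure.prod_apply hEm, ← lintegral_indicator hA]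
    congr 1; funext t
    by_cases ht : t ∈ A
    · have : Prod.mk t ⁻¹' E = {θ | t ∈ S θ} := by
        ext θ; simp [hE, hJ, ht]
      simp [Set.indicator, ht, this]
    · have : Prod.mk t ⁻¹' E = (∅ : Set Θ) := by
        ext θ; simp [hE, hJ, ht]
      simp [Set.indicator, ht, this]
  -- right side
  have hR : ∫ t in A, alphaFn π S t ∂lam
      = (∫⁻ t in A, π {θ | t ∈ S θ} ∂lam).toReal := by
    have : ∫ t in A, alphaFn π S t ∂lam
        = ∫ t in A, (π {θ | t ∈ S θ}).toReal ∂lam := by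
      refine integral_congr_ae (ae_of_all _ fun t => alphaFn_eq π S hjoint t)
    rw [this]
    exact integral_toReal (hmt.aemeasurable.restrict)
      (ae_of_all _ fun t => measure_lt_top π _)
  rw [hL, h1, h2, hR]

end Main

/-- The closing argument: a set where a positive function has nonpositive integral is null. -/
lemma lam_eq_zero_of_integral_nonpos {A : Set ℝ} (hA : MeasurableSet A) {f : ℝ → ℝ}
    (hfi : IntegrableOn f A lam) (hpos : ∀ t ∈ A, 0 < f t)
    (hle : ∫ t in A, f t ∂lam ≤ 0) : lam A = 0 := by
  have hnn : 0 ≤ᵐ[lam.restrict A] f :=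
    (ae_restrict_mem hA).mono fun t ht => (hpos t ht).le
  have hge : 0 ≤ ∫ t in A, f t ∂lam := integral_nonneg_of_ae hnn
  have h0 : ∫ t in A, f t ∂lam = 0 := le_antisymm hle hge
  have hzero : f =ᵐ[lam.restrict A] 0 :=
    (integral_eq_zero_iff_of_nonneg_ae hnn hfi).mp h0
  have hfalse : ∀ᵐ t ∂lam.restrict A, False := by
    filter_upwards [hzero, ae_restrict_mem hA] with t h1 h2
    exact absurd h1 (ne_of_gt (hpos t h2))
  have h := ae_iff.mp hfalse
  have huniv : {a : ℝ | ¬False} = Set.univ := by simp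
  rw [huniv, Measure.restrict_apply_univ] at h
  exact h

theorem stmt_1 {Θ : Type*} [MeasurableSpace Θ] (π : Measure Θ) [IsProbabilityMeasure π]
    (S : Θ → Set ℝ) (hsub : ∀ θ, S θ ⊆ Set.Icc 0 1) (hmeas : ∀ θ, MeasurableSet (S θ))
    (hjoint : MeasurableSet {p : ℝ × Θ | p.1 ∈ S p.2})
    (γ : ℝ) (hγ : γ ∈ Set.Icc (0:ℝ) 1)
    (Shat : Set ℝ) (hShat : MeasurableSet Shat) (hShatsub : Shat ⊆ Set.Icc 0 1)
    (hopt : ∀ T : Set ℝ, MeasurableSet T → T ⊆ Set.Icc 0 1 →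
      ∫ θ, Lloss γ Shat (S θ) ∂π ≤ ∫ θ, Lloss γ T (S θ) ∂π) :
    lam ({t : ℝ | γ < alphaFn π S t} \ Shat) = 0 ∧
    lam (Shat \ {t : ℝ | γ ≤ alphaFn π S t}) = 0 := by
  have hαm : Measurable (alphaFn π S) := alphaFn_measurable π S hjoint
  constructor
  · -- first part: add A := ({α > γ} ∩ Icc) \ Shat to Shat
    set A : Set ℝ := ({t : ℝ | γ < alphaFn π S t} ∩ Set.Icc 0 1) \ Shat with hAdef
    have hAm : MeasurableSet A :=
      ((measurableSet_lt measurable_const hαm).inter measurableSet_Icc).diff hShat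
    have hAsub : A ⊆ Set.Icc 0 1 := fun t ht => ht.1.2
    have hdisj : Disjoint Shat A := Set.disjoint_left.mpr fun t ht ht' => ht'.2 ht
    set T : Set ℝ := Shat ∪ A with hTdef
    have hTm : MeasurableSet T := hShat.union hAm
    have hTsub : T ⊆ Set.Icc 0 1 := Set.union_subset hShatsub hAsub
    -- per-θ identity
    have hper : ∀ θ, Lloss γ T (S θ)
        = Lloss γ Shat (S θ) + (γ * (lam A).toReal - (lam (A ∩ S θ)).toReal) := by
      intro θ
      have e1 : T \ S θ = (Shat \ S θ) ∪ (A \ S θ) := by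
        ext t; simp [hTdef]; tauto
      have d1 : Disjoint (Shat \ S θ) (A \ S θ) :=
        hdisj.mono Set.diff_subset Set.diff_subset
      have e2 : S θ \ Shat = (S θ \ T) ∪ (A ∩ S θ) := by
        ext t
        have h2 : t ∈ A → t ∉ Shat := fun h => h.2
        simp only [Set.mem_diff, Set.mem_union, Set.mem_inter_iff, hTdef]
        tauto
      have d2 : Disjoint (S θ \ T) (A ∩ S θ) := by
        refine Set.disjoint_left.mpr fun t ht ht' => ht.2 (Or.inr ht'.1)
      have e3 : A = (A \ S θ) ∪ (A ∩ S θ) := by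
        ext t; simp only [Set.mem_diff, Set.mem_union, Set.mem_inter_iff]; tauto
      have d3 : Disjoint (A \ S θ) (A ∩ S θ) :=
        Set.disjoint_left.mpr fun t ht ht' => ht.2 ht'.2
      have m1 : MeasurableSet (A \ S θ) := hAm.diff (hmeas θ)
      have m2 : MeasurableSet (A ∩ S θ) := hAm.inter (hmeas θ)
      have r1 : (lam (T \ S θ)).toReal = (lam (Shat \ S θ)).toReal + (lam (A \ S θ)).toReal := by
        rw [e1, toReal_lam_union d1 m1]
      have r2 : (lam (S θ \ Shat)).toReal = (lam (S θ \ T)).toReal + (lam (A ∩ S θ)).toReal := by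
        rw [e2, toReal_lam_union d2 m2]
      have r3 : (lam A).toReal = (lam (A \ S θ)).toReal + (lam (A ∩ S θ)).toReal := by
        conv_lhs => rw [e3]
        rw [toReal_lam_union d3 m2]
      have r2' : (lam (S θ \ T)).toReal
          = (lam (S θ \ Shat)).toReal - (lam (A ∩ S θ)).toReal := by linarith
      simp only [Lloss]
      rw [r1, r2', r3]
      ring
    -- integrate
    have hintS : Integrable (fun θ => Lloss γ Shat (S θ)) π :=
      integrable_Lloss π S hjoint γ hShat
    have hintv : Integrable (fun θ => (lam (A ∩ S θ)).toReal) π :=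
      integrable_toReal_inter π S hjoint hAm
    have hconst : Integrable (fun _ : Θ => γ * (lam A).toReal) π := integrable_const _
    have hRT : ∫ θ, Lloss γ T (S θ) ∂π
        = ∫ θ, Lloss γ Shat (S θ) ∂π
          + (γ * (lam A).toReal - ∫ θ, (lam (A ∩ S θ)).toReal ∂π) := by
      calc ∫ θ, Lloss γ T (S θ) ∂π
          = ∫ θ, (Lloss γ Shat (S θ)
            + (γ * (lam A).toReal - (lam (A ∩ S θ)).toReal)) ∂π := by
            exact integral_congr_ae (ae_of_all _ hper)
        _ = ∫ θ, Lloss γ Shat (S θ) ∂π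
            + ∫ θ, (γ * (lam A).toReal - (lam (A ∩ S θ)).toReal) ∂π :=
            integral_add hintS (hconst.sub hintv)
        _ = ∫ θ, Lloss γ Shat (S θ) ∂π
            + (γ * (lam A).toReal - ∫ θ, (lam (A ∩ S θ)).toReal ∂π) := by
            rw [integral_sub hconst hintv, integral_const]
            simp [measure_univ]
    have hineq := hopt T hTm hTsub
    rw [hRT] at hineq
    have hv : ∫ θ, (lam (A ∩ S θ)).toReal ∂π ≤ γ * (lam A).toReal := by linarith
    rw [fubini_key π S hjoint hAm] at hv
    -- conclude λ A = 0
    have hconstI : IntegrableOn (fun _ : ℝ => γ) A lam :=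
      integrableOn_const (lam_ne_top A)
    have hfi : IntegrableOn (fun t => alphaFn π S t - γ) A lam :=
      (alphaFn_integrableOn π S hjoint A).sub hconstI
    have hAzero : lam A = 0 := by
      refine lam_eq_zero_of_integral_nonpos hAm hfi
        (fun t ht => sub_pos.mpr (by exact ht.1.1)) ?_
      rw [integral_sub (alphaFn_integrableOn π S hjoint A) hconstI, setIntegral_const,
        smul_eq_mul]
      rw [show lam.real A = (lam A).toReal from rfl]; nlinarith [hv]
    -- translate to the goal
    have hgoalm : MeasurableSet ({t : ℝ | γ < alphaFn π S t} \ Shat) :=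
      (measurableSet_lt measurable_const hαm).diff hShat
    rw [lam, Measure.restrict_apply hgoalm]
    rw [lam, Measure.restrict_apply hAm] at hAzero
    have : ({t : ℝ | γ < alphaFn π S t} \ Shat) ∩ Set.Icc 0 1 = A ∩ Set.Icc 0 1 := by
      ext t; simp only [Set.mem_inter_iff, Set.mem_diff, Set.mem_setOf_eq, hAdef]; tauto
    rw [this]; exact hAzero
  · -- second part: remove B := Shat ∩ {α < γ} from Shat
    set B : Set ℝ := Shat ∩ {t : ℝ | alphaFn π S t < γ} with hBdef
    have hBm : MeasurableSet B := hShat.inter (measurableSet_lt hαm measurable_const)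
    have hBsub : B ⊆ Shat := Set.inter_subset_left
    set T : Set ℝ := Shat \ B with hTdef
    have hTm : MeasurableSet T := hShat.diff hBm
    have hTsub : T ⊆ Set.Icc 0 1 := fun t ht => hShatsub ht.1
    have hper : ∀ θ, Lloss γ T (S θ)
        = Lloss γ Shat (S θ) + ((lam (B ∩ S θ)).toReal - γ * (lam B).toReal) := by
      intro θ
      have e1 : Shat \ S θ = (T \ S θ) ∪ (B \ S θ) := by
        ext t
        have h2 : t ∈ B → t ∈ Shat := fun h => hBsub h
        simp only [Set.mem_diff, Set.mem_union, hTdef]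
        tauto
      have d1 : Disjoint (T \ S θ) (B \ S θ) :=
        Set.disjoint_left.mpr fun t ht ht' => ht.1.2 ht'.1
      have e2 : S θ \ T = (S θ \ Shat) ∪ (B ∩ S θ) := by
        ext t
        have h2 : t ∈ B → t ∈ Shat := fun h => hBsub h
        simp only [Set.mem_diff, Set.mem_union, Set.mem_inter_iff, hTdef]
        tauto
      have d2 : Disjoint (S θ \ Shat) (B ∩ S θ) :=
        Set.disjoint_left.mpr fun t ht ht' => ht.2 (hBsub ht'.1)
      have e3 : B = (B \ S θ) ∪ (B ∩ S θ) := by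
        ext t; simp only [Set.mem_diff, Set.mem_union, Set.mem_inter_iff]; tauto
      have d3 : Disjoint (B \ S θ) (B ∩ S θ) :=
        Set.disjoint_left.mpr fun t ht ht' => ht.2 ht'.2
      have m1 : MeasurableSet (B \ S θ) := hBm.diff (hmeas θ)
      have m2 : MeasurableSet (B ∩ S θ) := hBm.inter (hmeas θ)
      have r1 : (lam (Shat \ S θ)).toReal = (lam (T \ S θ)).toReal + (lam (B \ S θ)).toReal := by
        rw [e1, toReal_lam_union d1 m1]
      have r2 : (lam (S θ \ T)).toReal = (lam (S θ \ Shat)).toReal + (lam (B ∩ S θ)).toReal := by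
        rw [e2, toReal_lam_union d2 m2]
      have r3 : (lam B).toReal = (lam (B \ S θ)).toReal + (lam (B ∩ S θ)).toReal := by
        conv_lhs => rw [e3]
        rw [toReal_lam_union d3 m2]
      have r1' : (lam (T \ S θ)).toReal
          = (lam (Shat \ S θ)).toReal - (lam (B \ S θ)).toReal := by linarith
      have r3' : (lam (B \ S θ)).toReal
          = (lam B).toReal - (lam (B ∩ S θ)).toReal := by linarith
      simp only [Lloss]
      rw [r1', r2, r3']
      ring
    have hintS : Integrable (fun θ => Lloss γ Shat (S θ)) π :=
      integrable_Lloss π S hjoint γ hShat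
    have hintv : Integrable (fun θ => (lam (B ∩ S θ)).toReal) π :=
      integrable_toReal_inter π S hjoint hBm
    have hconst : Integrable (fun _ : Θ => γ * (lam B).toReal) π := integrable_const _
    have hRT : ∫ θ, Lloss γ T (S θ) ∂π
        = ∫ θ, Lloss γ Shat (S θ) ∂π
          + (∫ θ, (lam (B ∩ S θ)).toReal ∂π - γ * (lam B).toReal) := by
      calc ∫ θ, Lloss γ T (S θ) ∂π
          = ∫ θ, (Lloss γ Shat (S θ)
            + ((lam (B ∩ S θ)).toReal - γ * (lam B).toReal)) ∂π :=
            integral_congr_ae (ae_of_all _ hper)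
        _ = ∫ θ, Lloss γ Shat (S θ) ∂π
            + ∫ θ, ((lam (B ∩ S θ)).toReal - γ * (lam B).toReal) ∂π :=
            integral_add hintS (hintv.sub hconst)
        _ = ∫ θ, Lloss γ Shat (S θ) ∂π
            + (∫ θ, (lam (B ∩ S θ)).toReal ∂π - γ * (lam B).toReal) := by
            rw [integral_sub hintv hconst, integral_const]
            simp [measure_univ]
    have hineq := hopt T hTm hTsub
    rw [hRT] at hineq
    have hv : γ * (lam B).toReal ≤ ∫ θ, (lam (B ∩ S θ)).toReal ∂π := by linarith
    rw [fubini_key π S hjoint hBm] at hv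
    have hconstI : IntegrableOn (fun _ : ℝ => γ) B lam :=
      integrableOn_const (lam_ne_top B)
    have hfi : IntegrableOn (fun t => γ - alphaFn π S t) B lam :=
      hconstI.sub (alphaFn_integrableOn π S hjoint B)
    have hBzero : lam B = 0 := by
      refine lam_eq_zero_of_integral_nonpos hBm hfi
        (fun t ht => sub_pos.mpr (by exact ht.2)) ?_
      rw [integral_sub hconstI (alphaFn_integrableOn π S hjoint B), setIntegral_const,
        smul_eq_mul]
      rw [show lam.real B = (lam B).toReal from rfl]; nlinarith [hv]
    have : Shat \ {t : ℝ | γ ≤ alphaFn π S t} = B := by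
      ext t; simp [hBdef, not_le]
    rw [this]; exact hBzero
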